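/- If the LP min θ s.t. Σ_{j∈E∖{k}} λ_j x_{lj} ≤ θ x_{lk}, Σ_{j∈E∖{k}} λ_j x_{ij} ≤ x_{ik} (i ≠ l), Σ_{j∈E∖{k}} λ_j y_{rj} ≥ y_{rk}, λ ≥ 0 is feasible and its optimal value θ* were ≤ 1 while DMU_k is extreme and CCR-efficient, a contradiction follows: θ* < 1 would yield a point of T dominating DMU_k, and θ* = 1 with DMU_k extreme would make DMU_k a nonnegative combination of the other efficient DMUs. Hence θ* > 1 for every extreme CCR-efficient DMU_k for which the LP is feasible. -/
import Mathlib


/-- Feasibility of the input-oriented super-efficiency model (5). -/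
def Feas5 {n m s : ℕ} (X : Fin n → Fin m → ℝ) (Y : Fin n → Fin s → ℝ)
    (E : Finset (Fin n)) (k : Fin n) (li : Fin m) (θ : ℝ) (l : Fin n → ℝ) : Prop :=
  (∀ j, 0 ≤ l j) ∧
  (∑ j ∈ E.erase k, l j * X j li ≤ θ * X k li) ∧
  (∀ i, i ≠ li → ∑ j ∈ E.erase k, l j * X j i ≤ X k i) ∧
  (∀ r, Y k r ≤ ∑ j ∈ E.erase k, l j * Y j r)

/-- For every extreme CCR-efficient `DMU_k` for which the super-efficiency LP (5) at
input `li` is feasible, its optimal value is `θ* > 1`: every feasible radial value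
exceeds 1. -/
theorem extreme_efficient_feasible_implies_gt_one
    {n m s : ℕ} (X : Fin n → Fin m → ℝ) (Y : Fin n → Fin s → ℝ)
    (hX : ∀ j i, 0 < X j i) (hY : ∀ j r, 0 < Y j r)
    (E : Finset (Fin n)) (k : Fin n) (hk : k ∈ E) (li : Fin m)
    -- DMU_k is CCR-efficient: non-dominated in the PPS generated by E
    (heff : ¬ ∃ l : Fin n → ℝ, (∀ j, 0 ≤ l j) ∧
      (∀ i, ∑ j ∈ E, l j * X j i ≤ X k i) ∧
      (∀ r, Y k r ≤ ∑ j ∈ E, l j * Y j r) ∧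
      ¬ ((∀ i, ∑ j ∈ E, l j * X j i = X k i) ∧ (∀ r, ∑ j ∈ E, l j * Y j r = Y k r)))
    -- DMU_k is extreme
    (hextreme : ¬ ∃ l : Fin n → ℝ, (∀ j, 0 ≤ l j) ∧
      (∀ i, ∑ j ∈ E.erase k, l j * X j i = X k i) ∧
      (∀ r, ∑ j ∈ E.erase k, l j * Y j r = Y k r))
    (hfeas : ∃ (θ : ℝ) (l : Fin n → ℝ), Feas5 X Y E k li θ l) :
    ∀ (θ : ℝ) (l : Fin n → ℝ), Feas5 X Y E k li θ l → 1 < θ := by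
  intro θ l ⟨hl0, hli, hoth, hYc⟩
  by_contra h
  push_neg at h
  set l' : Fin n → ℝ := fun j => if j = k then 0 else l j with hl'
  have hl'k : l' k = 0 := by simp [hl']
  have hl0' : ∀ j, 0 ≤ l' j := fun j => by
    by_cases hj : j = k <;> simp [hl', hj, hl0 j]
  have hsumE : ∀ f : Fin n → ℝ, ∑ j ∈ E.erase k, l' j * f j = ∑ j ∈ E, l' j * f j :=
    fun f => Finset.sum_erase E (by simp [hl'k])
  have hsume : ∀ f : Fin n → ℝ, ∑ j ∈ E.erase k, l' j * f j = ∑ j ∈ E.erase k, l j * f j :=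
    fun f => Finset.sum_congr rfl fun j hj => by
      simp [hl', Finset.ne_of_mem_erase hj]
  have hsum : ∀ f : Fin n → ℝ, ∑ j ∈ E, l' j * f j = ∑ j ∈ E.erase k, l j * f j :=
    fun f => by rw [← hsumE, hsume]
  have hXle : ∀ i, ∑ j ∈ E, l' j * X j i ≤ X k i := by
    intro i
    rw [hsum]
    by_cases hi : i = li
    · subst hi
      refine hli.trans ?_
      nlinarith [hX k i]
    · exact hoth i hi
  have hYge : ∀ r, Y k r ≤ ∑ j ∈ E, l' j * Y j r := fun r => by rw [hsum]; exact hYc r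
  have heq : (∀ i, ∑ j ∈ E, l' j * X j i = X k i) ∧ (∀ r, ∑ j ∈ E, l' j * Y j r = Y k r) := by
    by_contra hne
    exact heff ⟨l', hl0', hXle, hYge, hne⟩
  exact hextreme ⟨l', hl0',
    fun i => by rw [hsumE]; exact heq.1 i,
    fun r => by rw [hsumE]; exact heq.2 r⟩
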